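/- For n ≥ 2 and 1 ≤ j ≤ n, the number of permutations of [n] that avoid both 213 and 312 and begin with the letter j equals 2^{n-j-1} if 1 ≤ j < n, and equals 1 if j = n. -/

import Mathlib

/-- `π` contains the pattern `p` (given as the sequence of its values). -/
def ContainsPat {n k : ℕ} (π : Equiv.Perm (Fin n)) (p : Fin k → ℕ) : Prop :=
  ∃ f : Fin k → Fin n, StrictMono f ∧ ∀ a b : Fin k, p a < p b ↔ π (f a) < π (f b)

/-- The first letter of `π` (in one-line notation, with values in `[n] = {1,…,n}`) is `i`. -/
def FirstIs {n : ℕ} (π : Equiv.Perm (Fin n)) (i : ℕ) : Prop :=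
  ∀ j : Fin n, (j : ℕ) = 0 → (π j : ℕ) + 1 = i

namespace Stmt9Aux

/-- Pointwise avoidance condition: no valley pattern. -/
def W {n : ℕ} (π : Equiv.Perm (Fin n)) : Prop :=
  ∀ a b c : Fin n, a < b → b < c → π b < π a → π c < π b

lemma strictMono3 {n : ℕ} {a b c : Fin n} (h1 : a < b) (h2 : b < c) :
    StrictMono ![a, b, c] := by
  intro x y hxy
  fin_cases x <;> fin_cases y <;> simp_all <;>
    first
      | exact h1 | exact h2 | exact h1.trans h2
      | exact absurd hxy (by decide)

lemma avoid_iff {n : ℕ} (π : Equiv.Perm (Fin n)) :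
    (¬ ContainsPat π ![2, 1, 3] ∧ ¬ ContainsPat π ![3, 1, 2]) ↔ W π := by
  have h2' : (⟨2, by norm_num⟩ : Fin 3) = 2 := rfl
  constructor
  · rintro ⟨h213, h312⟩ a b c hab hbc hba
    by_contra hcb
    have hne : π b ≠ π c := fun he => (lt_irrefl b) ((π.injective he) ▸ hbc)
    have hbc' : π b < π c := lt_of_le_of_ne (not_lt.mp hcb) hne
    have hne2 : π a ≠ π c := fun he =>
      (lt_irrefl a) ((π.injective he) ▸ (hab.trans hbc))
    rcases lt_or_gt_of_ne hne2 with hac | hac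
    · refine h213 ⟨![a, b, c], strictMono3 hab hbc, ?_⟩
      have k1 : ((π b : Fin n) : ℕ) < ((π a : Fin n) : ℕ) := hba
      have k2 : ((π a : Fin n) : ℕ) < ((π c : Fin n) : ℕ) := hac
      intro x y
      fin_cases x <;> fin_cases y <;>
        simp only [h2', Matrix.cons_val_zero, Matrix.cons_val_one, Matrix.head_cons,
          Matrix.cons_val_two, Matrix.tail_cons, Fin.mk_zero, Fin.mk_one, Fin.lt_def] <;>
        omega
    · refine h312 ⟨![a, b, c], strictMono3 hab hbc, ?_⟩
      have k1 : ((π b : Fin n) : ℕ) < ((π a : Fin n) : ℕ) := hba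
      have k2 : ((π c : Fin n) : ℕ) < ((π a : Fin n) : ℕ) := hac
      have k3 : ((π b : Fin n) : ℕ) < ((π c : Fin n) : ℕ) := hbc'
      intro x y
      fin_cases x <;> fin_cases y <;>
        simp only [h2', Matrix.cons_val_zero, Matrix.cons_val_one, Matrix.head_cons,
          Matrix.cons_val_two, Matrix.tail_cons, Fin.mk_zero, Fin.mk_one, Fin.lt_def] <;>
        omega
  · intro hW
    constructor
    · rintro ⟨f, hf, hp⟩
      have h01 : f 0 < f 1 := hf (by decide)
      have h12 : f 1 < f 2 := hf (by decide)
      have e1 : π (f 1) < π (f 0) := (hp 1 0).mp (by norm_num)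
      have e2 : π (f 1) < π (f 2) := (hp 1 2).mp (by decide)
      exact absurd e2 (not_lt.mpr (le_of_lt (hW _ _ _ h01 h12 e1)))
    · rintro ⟨f, hf, hp⟩
      have h01 : f 0 < f 1 := hf (by decide)
      have h12 : f 1 < f 2 := hf (by decide)
      have e1 : π (f 1) < π (f 0) := (hp 1 0).mp (by norm_num)
      have e2 : π (f 1) < π (f 2) := (hp 1 2).mp (by decide)
      exact absurd e2 (not_lt.mpr (le_of_lt (hW _ _ _ h01 h12 e1)))

lemma firstIs_iff {n : ℕ} (hn : 0 < n) (π : Equiv.Perm (Fin n)) (j : ℕ) :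
    FirstIs π j ↔ (π ⟨0, hn⟩ : ℕ) + 1 = j := by
  constructor
  · intro h; exact h ⟨0, hn⟩ rfl
  · intro h i hi
    have hi' : i = ⟨0, hn⟩ := Fin.ext hi
    rw [hi']; exact h

section Decode

variable {n : ℕ} (A : Finset (Fin n))

lemma card_compl' : Aᶜ.card = n - A.card := by
  simp [Finset.card_compl]

/-- The unimodal permutation function associated to `A`. -/
def gfun : Fin n → Fin n := fun i =>
  if h : (i : ℕ) < A.card then A.orderEmbOfFin rfl ⟨i, h⟩
  else Aᶜ.orderEmbOfFin rfl ⟨n - 1 - i, by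
    have h1 := i.isLt
    have h2 := card_compl' A
    omega⟩

lemma gfun_injective : Function.Injective (gfun A) := by
  intro x y hxy
  by_cases hx : (x : ℕ) < A.card <;> by_cases hy : (y : ℕ) < A.card <;>
    simp only [gfun, hx, hy, dif_pos, dif_neg, not_false_iff] at hxy
  · have h := (A.orderEmbOfFin rfl).injective hxy
    simp only [Fin.mk.injEq] at h
    exact Fin.ext h
  · exfalso
    have m1 : A.orderEmbOfFin rfl ⟨x, hx⟩ ∈ A := Finset.orderEmbOfFin_mem _ _ _
    have m2 : Aᶜ.orderEmbOfFin rfl ⟨n - 1 - (y : ℕ), by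
        have h1 := y.isLt; have h2 := card_compl' A; omega⟩ ∈ Aᶜ :=
      Finset.orderEmbOfFin_mem _ _ _
    rw [hxy] at m1
    exact (Finset.mem_compl.mp m2) m1
  · exfalso
    have m1 : Aᶜ.orderEmbOfFin rfl ⟨n - 1 - (x : ℕ), by
        have h1 := x.isLt; have h2 := card_compl' A; omega⟩ ∈ Aᶜ :=
      Finset.orderEmbOfFin_mem _ _ _
    have m2 : A.orderEmbOfFin rfl ⟨y, hy⟩ ∈ A := Finset.orderEmbOfFin_mem _ _ _
    rw [hxy] at m1
    exact (Finset.mem_compl.mp m1) m2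
  · have h := (Aᶜ.orderEmbOfFin rfl).injective hxy
    simp only [Fin.mk.injEq] at h
    have hx' := x.isLt
    have hy' := y.isLt
    exact Fin.ext (by omega)

/-- The unimodal permutation associated to `A`. -/
noncomputable def decodePerm : Equiv.Perm (Fin n) :=
  Equiv.ofBijective (gfun A) (Finite.injective_iff_bijective.mp (gfun_injective A))

lemma decodePerm_apply (i : Fin n) : decodePerm A i = gfun A i := rfl

lemma decodePerm_apply_lt (i : Fin n) (h : (i : ℕ) < A.card) :
    decodePerm A i = A.orderEmbOfFin rfl ⟨i, h⟩ := by
  simp [decodePerm_apply, gfun, h]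

lemma decodePerm_apply_ge (i : Fin n) (h : ¬ (i : ℕ) < A.card) :
    decodePerm A i = Aᶜ.orderEmbOfFin rfl ⟨n - 1 - (i : ℕ), by
      have h1 := i.isLt
      have h2 := card_compl' A
      omega⟩ := by
  simp [decodePerm_apply, gfun, h]

lemma W_decodePerm : W (decodePerm A) := by
  intro a b c hab hbc hba
  by_cases hb : (b : ℕ) < A.card
  · exfalso
    have ha : (a : ℕ) < A.card := lt_of_le_of_lt (le_of_lt hab) hb
    have hlt : decodePerm A a < decodePerm A b := by
      rw [decodePerm_apply_lt A a ha, decodePerm_apply_lt A b hb]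
      exact (A.orderEmbOfFin rfl).strictMono (by exact hab)
    exact absurd hba (not_lt.mpr (le_of_lt hlt))
  · have hc : ¬ (c : ℕ) < A.card := fun hc => hb (lt_of_le_of_lt (le_of_lt hbc) hc)
    rw [decodePerm_apply_ge A b hb, decodePerm_apply_ge A c hc]
    refine (Aᶜ.orderEmbOfFin rfl).strictMono ?_
    have h1 := b.isLt
    have h2 := c.isLt
    have hbc' : (b : ℕ) < (c : ℕ) := hbc
    exact Fin.mk_lt_mk.mpr (by omega)

lemma mem_iff_symm_lt (v : Fin n) :
    v ∈ A ↔ ((decodePerm A).symm v : ℕ) < A.card := by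
  set i := (decodePerm A).symm v with hi
  have hv : decodePerm A i = v := (decodePerm A).apply_symm_apply v
  constructor
  · intro hvA
    by_contra h
    rw [decodePerm_apply_ge A i h] at hv
    have m : Aᶜ.orderEmbOfFin rfl ⟨n - 1 - (i : ℕ), by
        have h1 := i.isLt; have h2 := card_compl' A; omega⟩ ∈ Aᶜ :=
      Finset.orderEmbOfFin_mem _ _ _
    rw [hv] at m
    exact (Finset.mem_compl.mp m) hvA
  · intro h
    rw [decodePerm_apply_lt A i h] at hv
    have m : A.orderEmbOfFin rfl ⟨(i : ℕ), h⟩ ∈ A := Finset.orderEmbOfFin_mem _ _ _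
    rwa [hv] at m

lemma decodePerm_zero (hn : 0 < n) {kk : Fin n} (hkk : kk ∈ A)
    (hmin : ∀ v ∈ A, kk ≤ v) : decodePerm A ⟨0, hn⟩ = kk := by
  have hpos : 0 < A.card := Finset.card_pos.mpr ⟨_, hkk⟩
  rw [decodePerm_apply_lt A ⟨0, hn⟩ (by simpa using hpos)]
  have hz := Finset.orderEmbOfFin_zero (s := A) rfl hpos
  have heq : (⟨((⟨0, hn⟩ : Fin n) : ℕ), by simpa using hpos⟩ : Fin A.card) = ⟨0, hpos⟩ := rfl
  rw [heq, hz]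
  exact le_antisymm (Finset.min'_le A kk hkk) (hmin _ (A.min'_mem _))

lemma decodePerm_symm_last (hn : 0 < n) (hlast : (⟨n - 1, by omega⟩ : Fin n) ∈ A) :
    ((decodePerm A).symm ⟨n - 1, by omega⟩ : ℕ) = A.card - 1 := by
  have hpos : 0 < A.card := Finset.card_pos.mpr ⟨_, hlast⟩
  have hcn : A.card ≤ n := by
    have := Finset.card_le_card (Finset.subset_univ A)
    simpa using this
  have happ : decodePerm A ⟨A.card - 1, by omega⟩ = (⟨n - 1, by omega⟩ : Fin n) := by
    rw [decodePerm_apply_lt A ⟨A.card - 1, by omega⟩ (by simpa using Nat.sub_lt hpos one_pos)]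
    have hl := Finset.orderEmbOfFin_last (s := A) rfl hpos
    have heq : (⟨((⟨A.card - 1, by omega⟩ : Fin n) : ℕ), by
        simpa using Nat.sub_lt hpos one_pos⟩ : Fin A.card) =
        ⟨A.card - 1, Nat.sub_lt hpos (Nat.succ_pos 0)⟩ := rfl
    rw [heq, hl]
    refine le_antisymm ?_ (Finset.le_max' _ _ hlast)
    have hlt := (A.max' ⟨_, hlast⟩).isLt
    exact Fin.le_def.mpr (show ((A.max' ⟨_, hlast⟩ : Fin n) : ℕ) ≤ (n : ℕ) - 1 by omega)
  have hs := congrArg (decodePerm A).symm happ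
  rw [Equiv.symm_apply_apply] at hs
  rw [← hs]

end Decode

section Count

variable {n : ℕ}

/-- Classification: any `W` permutation equals `decodePerm` of the set of values at
positions up to the position of the maximum; moreover the first value is the minimum
of that set. -/
lemma eq_decodePerm (hn : 0 < n) (π : Equiv.Perm (Fin n)) (hW : W π) :
    π = decodePerm (Finset.univ.filter
        (fun v => π.symm v ≤ π.symm ⟨n - 1, by omega⟩)) ∧
      ∀ v ∈ (Finset.univ.filter
        (fun v => π.symm v ≤ π.symm ⟨n - 1, by omega⟩)), π ⟨0, hn⟩ ≤ v := by
  set last : Fin n := ⟨n - 1, by omega⟩ with hlastdef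
  set p : Fin n := π.symm last with hp
  set A : Finset (Fin n) := Finset.univ.filter (fun v => π.symm v ≤ p) with hA
  have hπp : π p = last := π.apply_symm_apply last
  have hlastval : (last : ℕ) = n - 1 := rfl
  have hle_last : ∀ v : Fin n, v ≤ last := by
    intro v
    exact Fin.le_def.mpr (by have := v.isLt; omega)
  have mono : ∀ a b : Fin n, a < b → b ≤ p → π a < π b := by
    intro a b hab hbp
    rcases eq_or_lt_of_le hbp with rfl | hbp'
    · have hne : π a ≠ last := fun he =>
        (lt_irrefl a) ((π.injective (he.trans hπp.symm)) ▸ hab)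
      exact hπp ▸ lt_of_le_of_ne (hle_last (π a)) hne
    · by_contra h
      have hne : π b ≠ π a := fun he => (lt_irrefl a) ((π.injective he) ▸ hab)
      have hba : π b < π a := lt_of_le_of_ne (not_lt.mp h) hne
      have hcon := hW a b p hab hbp' hba
      rw [hπp] at hcon
      exact absurd (hle_last (π b)) (not_le.mpr hcon)
  have anti : ∀ b c : Fin n, p ≤ b → b < c → π c < π b := by
    intro b c hpb hbc
    rcases eq_or_lt_of_le hpb with he | hpb'
    · have hb : π b = last := by rw [← he]; exact hπp
      have hne : π c ≠ last := fun hee =>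
        (lt_irrefl b) ((π.injective (hee.trans hb.symm)) ▸ hbc)
      rw [hb]
      exact lt_of_le_of_ne (hle_last (π c)) hne
    · have hne : π b ≠ last := fun he =>
        (lt_irrefl p) ((π.injective (he.trans hπp.symm)) ▸ hpb')
      have hb : π b < π p := hπp ▸ lt_of_le_of_ne (hle_last (π b)) hne
      exact hW p b c hpb' hbc hb
  have hmemA : ∀ v : Fin n, v ∈ A ↔ π.symm v ≤ p := by
    intro v; simp [hA]
  have hAcard : A.card = (p : ℕ) + 1 := by
    have himg : A = Finset.image π (Finset.Iic p) := by
      ext v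
      rw [hmemA]
      simp only [Finset.mem_image, Finset.mem_Iic]
      constructor
      · intro h; exact ⟨π.symm v, h, π.apply_symm_apply v⟩
      · rintro ⟨i, hip, rfl⟩; rwa [π.symm_apply_apply]
    rw [himg, Finset.card_image_of_injective _ π.injective, Fin.card_Iic]
  have hcn : A.card ≤ n := by
    have := Finset.card_le_card (Finset.subset_univ A)
    simpa using this
  constructor
  · refine Equiv.ext fun i => ?_
    by_cases hi : (i : ℕ) < A.card
    · rw [decodePerm_apply_lt A i hi]
      have key : ∀ r : Fin A.card, π ⟨(r : ℕ), lt_of_lt_of_le r.isLt hcn⟩ =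
          A.orderEmbOfFin rfl r := by
        have hu := Finset.orderEmbOfFin_unique (s := A) (k := A.card) rfl
          (f := fun r : Fin A.card => π ⟨(r : ℕ), lt_of_lt_of_le r.isLt hcn⟩)
          (fun r => by
            rw [hmemA, π.symm_apply_apply]
            exact Fin.le_def.mpr (show (r : ℕ) ≤ (p : ℕ) by have := r.isLt; omega))
          (fun r s hrs => by
            refine mono _ _ (Fin.mk_lt_mk.mpr hrs) ?_
            exact Fin.le_def.mpr (show (s : ℕ) ≤ (p : ℕ) by have := s.isLt; omega))
        exact fun r => congrFun hu r
      convert key ⟨(i : ℕ), hi⟩ using 2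
    · rw [decodePerm_apply_ge A i hi]
      have hcc := card_compl' A
      have hiLt := i.isLt
      have key : ∀ r : Fin Aᶜ.card, π ⟨n - 1 - (r : ℕ), by have := r.isLt; omega⟩ =
          Aᶜ.orderEmbOfFin rfl r := by
        have hu := Finset.orderEmbOfFin_unique (s := Aᶜ) (k := Aᶜ.card) rfl
          (f := fun r : Fin Aᶜ.card => π ⟨n - 1 - (r : ℕ), by
            have := r.isLt; omega⟩)
          (fun r => by
            rw [Finset.mem_compl, hmemA, π.symm_apply_apply]
            have hr := r.isLt
            exact not_le.mpr (Fin.lt_def.mpr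
              (show (p : ℕ) < n - 1 - (r : ℕ) by omega)))
          (fun r s hrs => by
            have hr := r.isLt
            have hs := s.isLt
            have hrs' : (r : ℕ) < (s : ℕ) := hrs
            refine anti _ _ ?_ (Fin.mk_lt_mk.mpr (by omega))
            exact Fin.le_def.mpr (show (p : ℕ) ≤ n - 1 - (s : ℕ) by omega))
        exact fun r => congrFun hu r
      have hidx : n - 1 - (i : ℕ) < Aᶜ.card := by omega
      convert key ⟨n - 1 - (i : ℕ), hidx⟩ using 2
      exact Fin.ext (show (i : ℕ) = n - 1 - (n - 1 - (i : ℕ)) by omega)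
  · intro v hv
    have hvp : π.symm v ≤ p := (hmemA v).mp hv
    rcases eq_or_lt_of_le (Fin.le_def.mpr (Nat.zero_le _) :
        (⟨0, hn⟩ : Fin n) ≤ π.symm v) with he | hlt
    · rw [← π.apply_symm_apply v, ← he]
    · have := mono ⟨0, hn⟩ (π.symm v) hlt hvp
      rw [π.apply_symm_apply] at this
      exact le_of_lt this

set_option maxHeartbeats 1000000 in
/-- The central counting lemma. -/
lemma count_aux (n k : ℕ) (hn : 2 ≤ n) (hk : k < n) :
    Nat.card {π : Equiv.Perm (Fin n) //
      W π ∧ π ⟨0, by omega⟩ = ⟨k, hk⟩} = 2 ^ (n - k - 2) := by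
  set kk : Fin n := ⟨k, hk⟩ with hkkdef
  set last : Fin n := ⟨n - 1, by omega⟩ with hlastdef
  set P : Finset (Fin n) → Prop :=
    (fun A => kk ∈ A ∧ last ∈ A ∧ ∀ v ∈ A, kk ≤ v) with hPdef
  have step1 : Nat.card {π : Equiv.Perm (Fin n) // W π ∧ π ⟨0, by omega⟩ = kk} =
      Nat.card {A : Finset (Fin n) // P A} := by
    refine Nat.card_congr (Equiv.symm (Equiv.ofBijective
      (fun A => ⟨decodePerm A.1, W_decodePerm A.1,
        decodePerm_zero A.1 (by omega) A.2.1 A.2.2.2⟩) ⟨?_, ?_⟩))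
    · rintro ⟨A, hA⟩ ⟨A', hA'⟩ h
      have hperm : decodePerm A = decodePerm A' := congrArg Subtype.val h
      have hcard : A.card = A'.card := by
        have h1 := decodePerm_symm_last A (by omega) hA.2.1
        have h2 := decodePerm_symm_last A' (by omega) hA'.2.1
        have hpos1 : 0 < A.card := Finset.card_pos.mpr ⟨_, hA.2.1⟩
        have hpos2 : 0 < A'.card := Finset.card_pos.mpr ⟨_, hA'.2.1⟩
        rw [hperm] at h1
        omega
      refine Subtype.ext (Finset.ext fun v => ?_)
      rw [mem_iff_symm_lt, mem_iff_symm_lt, hperm, hcard]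
    · rintro ⟨π, hW, h0⟩
      obtain ⟨hdec, hmin⟩ := eq_decodePerm (by omega : 0 < n) π hW
      set A : Finset (Fin n) := Finset.univ.filter
        (fun v => π.symm v ≤ π.symm ⟨n - 1, by omega⟩) with hA
      have hPA : P A := by
        refine ⟨?_, ?_, ?_⟩
        · simp only [hA, Finset.mem_filter, Finset.mem_univ, true_and]
          rw [← h0, π.symm_apply_apply]
          exact Fin.le_def.mpr (Nat.zero_le _)
        · simp only [hA, Finset.mem_filter, Finset.mem_univ, true_and, le_refl]
          exact le_rfl
        · intro v hv
          rw [← h0]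
          exact hmin v hv
      exact ⟨⟨A, hPA⟩, Subtype.ext hdec.symm⟩
  rw [step1]
  have hkval : (kk : ℕ) = k := rfl
  have hlastval : (last : ℕ) = n - 1 := rfl
  have hkl : kk ≤ last := Fin.le_def.mpr (by omega)
  have e : {A : Finset (Fin n) // P A} ≃
      {B : Finset (Fin n) // B ⊆ Finset.Ioo kk last} :=
    { toFun := fun A => ⟨A.1 ∩ Finset.Ioo kk last, Finset.inter_subset_right⟩
      invFun := fun B => ⟨insert kk (insert last B.1), by
        refine ⟨Finset.mem_insert_self _ _,
          Finset.mem_insert_of_mem (Finset.mem_insert_self _ _), ?_⟩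
        intro v hv
        rcases Finset.mem_insert.mp hv with rfl | hv
        · exact le_refl _
        rcases Finset.mem_insert.mp hv with rfl | hv
        · exact hkl
        · exact le_of_lt (Finset.mem_Ioo.mp (B.2 hv)).1⟩
      left_inv := fun A => by
        apply Subtype.ext
        ext v
        simp only [Finset.mem_insert, Finset.mem_inter, Finset.mem_Ioo]
        constructor
        · rintro (rfl | rfl | ⟨hv, _⟩)
          · exact A.2.1
          · exact A.2.2.1
          · exact hv
        · intro hv
          rcases eq_or_lt_of_le (A.2.2.2 v hv) with he | hlt
          · exact Or.inl he.symm
          have hvlast : v ≤ last := Fin.le_def.mpr (by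
            have := v.isLt
            omega)
          rcases eq_or_lt_of_le hvlast with he | hlt2
          · exact Or.inr (Or.inl he)
          · exact Or.inr (Or.inr ⟨hv, hlt, hlt2⟩)
      right_inv := fun B => by
        apply Subtype.ext
        ext v
        simp only [Finset.mem_inter, Finset.mem_insert, Finset.mem_Ioo]
        constructor
        · rintro ⟨(rfl | rfl | hv), h2⟩
          · exact absurd h2.1 (lt_irrefl _)
          · exact absurd h2.2 (lt_irrefl _)
          · exact hv
        · intro hv
          exact ⟨Or.inr (Or.inr hv), Finset.mem_Ioo.mp (B.2 hv)⟩ }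
  rw [Nat.card_congr e]
  have e2 : {B : Finset (Fin n) // B ⊆ Finset.Ioo kk last} ≃
      {B : Finset (Fin n) // B ∈ (Finset.Ioo kk last).powerset} :=
    Equiv.subtypeEquivRight (fun B => (Finset.mem_powerset).symm)
  rw [Nat.card_congr e2, Nat.card_eq_finsetCard, Finset.card_powerset, Fin.card_Ioo]
  congr 1
  omega

end Count
end Stmt9Aux

open Stmt9Aux in
/-- For `n ≥ 2`, the number of `{213,312}`-avoiding permutations of `[n]` starting
with `j` is `2^{n-j-1}` for `1 ≤ j < n` and `1` for `j = n`. -/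
theorem stmt_9 (n : ℕ) (hn : 2 ≤ n) :
    (∀ j, 1 ≤ j → j < n →
      Nat.card {π : Equiv.Perm (Fin n) //
        ¬ ContainsPat π ![2, 1, 3] ∧ ¬ ContainsPat π ![3, 1, 2] ∧ FirstIs π j} =
        2 ^ (n - j - 1)) ∧
    Nat.card {π : Equiv.Perm (Fin n) //
      ¬ ContainsPat π ![2, 1, 3] ∧ ¬ ContainsPat π ![3, 1, 2] ∧ FirstIs π n} = 1 := by
  have hn0 : 0 < n := by omega
  have main : ∀ j, 1 ≤ j → j ≤ n →
      Nat.card {π : Equiv.Perm (Fin n) //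
        ¬ ContainsPat π ![2, 1, 3] ∧ ¬ ContainsPat π ![3, 1, 2] ∧ FirstIs π j} =
        2 ^ (n - j - 1) := by
    intro j hj1 hjn
    have hk : j - 1 < n := by omega
    have hcongr : {π : Equiv.Perm (Fin n) //
        ¬ ContainsPat π ![2, 1, 3] ∧ ¬ ContainsPat π ![3, 1, 2] ∧ FirstIs π j} ≃
        {π : Equiv.Perm (Fin n) // W π ∧ π ⟨0, by omega⟩ = ⟨j - 1, hk⟩} := by
      refine Equiv.subtypeEquivRight fun π => ?_
      constructor
      · rintro ⟨h1, h2, h3⟩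
        refine ⟨(avoid_iff π).mp ⟨h1, h2⟩, ?_⟩
        have := (firstIs_iff hn0 π j).mp h3
        exact Fin.ext (show ((π ⟨0, hn0⟩ : Fin n) : ℕ) = j - 1 by omega)
      · rintro ⟨hW, h0⟩
        obtain ⟨h1, h2⟩ := (avoid_iff π).mpr hW
        refine ⟨h1, h2, (firstIs_iff hn0 π j).mpr ?_⟩
        rw [h0]
        simp
        omega
    rw [Nat.card_congr hcongr, count_aux n (j - 1) hn hk]
    congr 1
    omega
  constructor
  · intro j hj1 hjn
    exact main j hj1 (le_of_lt hjn)
  · rw [main n (by omega) le_rfl]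
    have : n - n - 1 = 0 := by omega
    rw [this, pow_zero]
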